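/- Let V, W be subspaces of ℝⁿ with V ∩ W = {0}, and X, Y positive semidefinite matrices with range V and W respectively. Let T = (O_V, O_W) be the matrix formed by concatenating orthonormal bases of V and W. Then det_V(X)·det_W(Y) = det_{V+W}((T⁺)ᵀT⁺)·det_{V+W}(X+Y), where T⁺ is the Moore–Penrose pseudoinverse and det_U(M) = det(O_Uᵀ M O_U) for O_U an orthonormal basis of U. -/

import Mathlib

open Matrix

/-- `Tp` is the Moore–Penrose pseudoinverse of the (rectangular) matrix `T`. -/
def IsMoorePenrose {α β : Type*} [Fintype α] [Fintype β]
    (T : Matrix α β ℝ) (Tp : Matrix β α ℝ) : Prop :=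
  T * Tp * T = T ∧ Tp * T * Tp = Tp ∧ (T * Tp)ᵀ = T * Tp ∧ (Tp * T)ᵀ = Tp * T

/-- If the range of `B` is contained in the range of `O` and `O` has orthonormal columns,
then projecting by `O * Oᵀ` fixes `B`. -/
lemma proj_fix {n : ℕ} {κ ι : Type*} [Fintype κ] [Fintype ι] [DecidableEq ι] [DecidableEq κ]
    (O : Matrix (Fin n) κ ℝ) (hO : Oᵀ * O = 1)
    (B : Matrix (Fin n) ι ℝ)
    (h : LinearMap.range B.mulVecLin ≤ LinearMap.range O.mulVecLin) :
    O * (Oᵀ * B) = B := by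
  ext i j
  obtain ⟨c, hc⟩ := h ⟨Pi.single j 1, rfl⟩
  have hc' : O *ᵥ c = B *ᵥ Pi.single j 1 := hc
  have key : (O * (Oᵀ * B)) *ᵥ Pi.single j 1 = B *ᵥ Pi.single j 1 := by
    have hcc : Oᵀ *ᵥ (O *ᵥ c) = c := by
      rw [Matrix.mulVec_mulVec, hO, Matrix.one_mulVec]
    rw [← Matrix.mulVec_mulVec, ← Matrix.mulVec_mulVec, ← hc', hcc]
  have := congrFun key i
  simpa [Matrix.mulVec_single_one] using this

/-- A real PSD matrix with range inside that of an orthonormal `O` can be written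
`O * (Oᵀ * X * O) * Oᵀ`. -/
lemma psd_decomp {n : ℕ} {κ : Type*} [Fintype κ] [DecidableEq κ]
    (O : Matrix (Fin n) κ ℝ) (hO : Oᵀ * O = 1)
    (X : Matrix (Fin n) (Fin n) ℝ) (hX : X.PosSemidef)
    (h : LinearMap.range X.mulVecLin ≤ LinearMap.range O.mulVecLin) :
    O * (Oᵀ * X * O) * Oᵀ = X := by
  have hXs : Xᵀ = X := by have hX1 := hX.1; simp at hX1; exact hX1
  have h1 : O * (Oᵀ * X) = X := proj_fix O hO X h
  have h2 : X * (O * Oᵀ) = X := by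
    have := congrArg Matrix.transpose h1
    simpa [Matrix.transpose_mul, hXs, Matrix.mul_assoc] using this
  calc O * (Oᵀ * X * O) * Oᵀ = O * (Oᵀ * (X * (O * Oᵀ))) := by
        simp only [Matrix.mul_assoc]
    _ = O * (Oᵀ * X) := by rw [h2]
    _ = X := h1

theorem stmt14 {n d1 d2 : ℕ}
    (OV : Matrix (Fin n) (Fin d1) ℝ) (OW : Matrix (Fin n) (Fin d2) ℝ)
    (hOV : OVᵀ * OV = 1) (hOW : OWᵀ * OW = 1)
    (hindep : LinearMap.range OV.mulVecLin ⊓ LinearMap.range OW.mulVecLin = ⊥)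
    (X Y : Matrix (Fin n) (Fin n) ℝ) (hX : X.PosSemidef) (hY : Y.PosSemidef)
    (hVX : LinearMap.range X.mulVecLin = LinearMap.range OV.mulVecLin)
    (hWY : LinearMap.range Y.mulVecLin = LinearMap.range OW.mulVecLin)
    (OU : Matrix (Fin n) (Fin d1 ⊕ Fin d2) ℝ) (hOU : OUᵀ * OU = 1)
    (hU : LinearMap.range OU.mulVecLin =
      LinearMap.range OV.mulVecLin ⊔ LinearMap.range OW.mulVecLin)
    (Tp : Matrix (Fin d1 ⊕ Fin d2) (Fin n) ℝ)
    (hTp : IsMoorePenrose (Matrix.fromCols OV OW) Tp) :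
    (OVᵀ * X * OV).det * (OWᵀ * Y * OW).det =
      (OUᵀ * (Tpᵀ * Tp) * OU).det * (OUᵀ * (X + Y) * OU).det := by
  obtain ⟨hmp1, hmp2, hmp3, hmp4⟩ := hTp
  set T : Matrix (Fin n) (Fin d1 ⊕ Fin d2) ℝ := Matrix.fromCols OV OW with hT
  set S : Matrix (Fin d1 ⊕ Fin d2) (Fin d1 ⊕ Fin d2) ℝ := Tᵀ * T with hSdef
  -- decompositions of X and Y
  have hXd : OV * (OVᵀ * X * OV) * OVᵀ = X := psd_decomp OV hOV X hX (le_of_eq hVX)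
  have hYd : OW * (OWᵀ * Y * OW) * OWᵀ = Y := psd_decomp OW hOW Y hY (le_of_eq hWY)
  -- splitting mulVec of T
  have hsplit : ∀ v : (Fin d1 ⊕ Fin d2) → ℝ,
      T *ᵥ v = OV *ᵥ (v ∘ Sum.inl) + OW *ᵥ (v ∘ Sum.inr) := by
    intro v
    have helim : Sum.elim (v ∘ Sum.inl) (v ∘ Sum.inr) = v := funext fun x => by cases x <;> rfl
    calc T *ᵥ v = T *ᵥ Sum.elim (v ∘ Sum.inl) (v ∘ Sum.inr) := by rw [helim]
      _ = OV *ᵥ (v ∘ Sum.inl) + OW *ᵥ (v ∘ Sum.inr) := by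
          rw [hT]; exact Matrix.fromCols_mulVec_sumElim OV OW _ _
  -- X + Y = T * D * Tᵀ
  have hXY : X + Y = T * Matrix.fromBlocks (OVᵀ * X * OV) 0 0 (OWᵀ * Y * OW) * Tᵀ := by
    rw [hT, Matrix.fromCols_mul_fromBlocks, Matrix.transpose_fromCols,
      Matrix.fromCols_mul_fromRows]
    simp only [Matrix.mul_zero, add_zero, zero_add]
    rw [hXd, hYd]
  -- T has trivial kernel
  have hTker : ∀ v : (Fin d1 ⊕ Fin d2) → ℝ, T *ᵥ v = 0 → v = 0 := by
    intro v hv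
    have hv' : OV *ᵥ (v ∘ Sum.inl) + OW *ᵥ (v ∘ Sum.inr) = 0 := by
      rw [← hsplit v]; exact hv
    have heq : OV *ᵥ (v ∘ Sum.inl) = -(OW *ᵥ (v ∘ Sum.inr)) :=
      eq_neg_of_add_eq_zero_left hv'
    have hm1 : OV *ᵥ (v ∘ Sum.inl) ∈ LinearMap.range OV.mulVecLin := ⟨v ∘ Sum.inl, rfl⟩
    have hm2 : OV *ᵥ (v ∘ Sum.inl) ∈ LinearMap.range OW.mulVecLin := by
      refine ⟨-(v ∘ Sum.inr), ?_⟩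
      rw [Matrix.mulVecLin_apply, Matrix.mulVec_neg, ← heq]
    have hbot : OV *ᵥ (v ∘ Sum.inl) ∈
        LinearMap.range OV.mulVecLin ⊓ LinearMap.range OW.mulVecLin :=
      Submodule.mem_inf.mpr ⟨hm1, hm2⟩
    rw [hindep, Submodule.mem_bot] at hbot
    have h02 : OW *ᵥ (v ∘ Sum.inr) = 0 := by
      have := hv'; rw [hbot, zero_add] at this; exact this
    have hvl : v ∘ Sum.inl = 0 := by
      have := congrArg (fun w => OVᵀ *ᵥ w) hbot
      simpa [Matrix.mulVec_mulVec, hOV, Matrix.one_mulVec] using this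
    have hvr : v ∘ Sum.inr = 0 := by
      have := congrArg (fun w => OWᵀ *ᵥ w) h02
      simpa [Matrix.mulVec_mulVec, hOW, Matrix.one_mulVec] using this
    funext x
    cases x with
    | inl a => exact congrFun hvl a
    | inr a => exact congrFun hvr a
  -- S has trivial kernel, hence is a unit
  have hSker : ∀ v : (Fin d1 ⊕ Fin d2) → ℝ, S *ᵥ v = 0 → v = 0 := by
    intro v hv
    apply hTker
    have h0 : (T *ᵥ v) ⬝ᵥ (T *ᵥ v) = 0 := by
      rw [Matrix.dotProduct_mulVec, ← Matrix.mulVec_transpose, Matrix.mulVec_mulVec,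
        ← hSdef, hv, zero_dotProduct]
    exact dotProduct_self_eq_zero.mp h0
  have hSunit : IsUnit S := by
    rw [← Matrix.mulVec_injective_iff_isUnit]
    intro x y hxy
    have h0 : S *ᵥ (x - y) = 0 := by
      rw [Matrix.mulVec_sub, hxy, sub_self]
    exact sub_eq_zero.mp (hSker _ h0)
  have hSdet : IsUnit S.det := (Matrix.isUnit_iff_isUnit_det S).mp hSunit
  have hSdet0 : S.det ≠ 0 := hSdet.ne_zero
  have hSsymm : Sᵀ = S := by
    rw [hSdef, Matrix.transpose_mul, Matrix.transpose_transpose]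
  -- Tp = S⁻¹ * Tᵀ
  have h5 : S * Tp = Tᵀ := by
    calc S * Tp = Tᵀ * (T * Tp) := by rw [hSdef, Matrix.mul_assoc]
      _ = Tᵀ * (T * Tp)ᵀ := by rw [hmp3]
      _ = (T * Tp * T)ᵀ := (Matrix.transpose_mul (T * Tp) T).symm
      _ = Tᵀ := by rw [hmp1]
  have hTpEq : Tp = S⁻¹ * Tᵀ := by
    rw [← h5, ← Matrix.mul_assoc, Matrix.nonsing_inv_mul S hSdet, Matrix.one_mul]
  have hTpTr : Tpᵀ = T * S⁻¹ := by
    rw [hTpEq, Matrix.transpose_mul, Matrix.transpose_transpose,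
      Matrix.transpose_nonsing_inv, hSsymm]
  -- T = OU * (OUᵀ * T)
  have hTA : OU * (OUᵀ * T) = T := by
    apply proj_fix OU hOU T
    rw [hU]
    rintro y ⟨v, rfl⟩
    rw [Matrix.mulVecLin_apply, hsplit v]
    exact Submodule.add_mem_sup ⟨v ∘ Sum.inl, rfl⟩ ⟨v ∘ Sum.inr, rfl⟩
  have hSA : (OUᵀ * T)ᵀ * (OUᵀ * T) = S := by
    rw [Matrix.transpose_mul, Matrix.transpose_transpose, Matrix.mul_assoc, hTA, hSdef]
  have hdetA : (OUᵀ * T).det * (OUᵀ * T).det = S.det := by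
    rw [← hSA, Matrix.det_mul, Matrix.det_transpose]
  -- the two factors on the right
  have hfac2 : OUᵀ * (X + Y) * OU =
      (OUᵀ * T) * (Matrix.fromBlocks (OVᵀ * X * OV) 0 0 (OWᵀ * Y * OW) * (OUᵀ * T)ᵀ) := by
    rw [hXY, Matrix.transpose_mul, Matrix.transpose_transpose]
    simp only [Matrix.mul_assoc]
  have e2 : (OUᵀ * (X + Y) * OU).det = S.det * ((OVᵀ * X * OV).det * (OWᵀ * Y * OW).det) := by
    rw [hfac2, Matrix.det_mul, Matrix.det_mul, Matrix.det_transpose,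
      Matrix.det_fromBlocks_zero₂₁]
    linear_combination ((OVᵀ * X * OV).det * (OWᵀ * Y * OW).det) * hdetA
  have hfac1 : OUᵀ * (Tpᵀ * Tp) * OU =
      (OUᵀ * T) * (S⁻¹ * (S⁻¹ * (OUᵀ * T)ᵀ)) := by
    rw [hTpTr, hTpEq, Matrix.transpose_mul, Matrix.transpose_transpose]
    simp only [Matrix.mul_assoc]
  have e1 : (OUᵀ * (Tpᵀ * Tp) * OU).det = (S.det)⁻¹ := by
    have ha0 : (OUᵀ * T).det ≠ 0 := by
      intro h; exact hSdet0 (by rw [← hdetA, h, mul_zero])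
    rw [hfac1, Matrix.det_mul, Matrix.det_mul, Matrix.det_mul, Matrix.det_transpose,
      Matrix.det_nonsing_inv, Ring.inverse_eq_inv, ← hdetA]
    field_simp
  rw [e1, e2, inv_mul_cancel_left₀ hSdet0]
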